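/- The Hochschild coboundary b maps cyclic n-linear functionals to cyclic (n+1)-linear functionals: if φ satisfies φ(c_1,...,c_n,c_0) = (-1)^n φ(c_0,c_1,...,c_n), then bφ satisfies the analogous cyclicity condition in degree n+1. -/

import Mathlib

/-- The Hochschild coboundary map on (n+1)-linear functionals over an algebra `C`. -/
noncomputable def hochschildB {C : Type*} [Ring C] (n : ℕ) (φ : (Fin (n + 1) → C) → ℂ) :
    (Fin (n + 2) → C) → ℂ := fun c =>
  (∑ j : Fin (n + 1), (-1 : ℂ) ^ (j : ℕ) *
    φ (fun i => if (i : ℕ) < (j : ℕ) then c i.castSucc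
        else if (i : ℕ) = (j : ℕ) then c i.castSucc * c i.succ
        else c i.succ))
  + (-1 : ℂ) ^ (n + 1) *
    φ (fun i => if (i : ℕ) = 0 then c (Fin.last (n + 1)) * c 0 else c i.castSucc)

/-- An (n+1)-linear functional is cyclic if `φ(c₁,…,c_n,c₀) = (-1)^n φ(c₀,…,c_n)`;
the cyclic shift is implemented by the cyclic addition on `Fin (n+1)`. -/
def IsCyclic' {C : Type*} [Ring C] (n : ℕ) (φ : (Fin (n + 1) → C) → ℂ) : Prop :=
  ∀ c : Fin (n + 1) → C, φ (fun i => c (i + 1)) = (-1 : ℂ) ^ n * φ c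

section Aux

variable {C : Type*} [Ring C]

/-- The j-th argument vector in the Hochschild coboundary. -/
def Aarg (n : ℕ) (j : Fin (n + 1)) (c : Fin (n + 2) → C) : Fin (n + 1) → C := fun i =>
  if (i : ℕ) < (j : ℕ) then c i.castSucc
  else if (i : ℕ) = (j : ℕ) then c i.castSucc * c i.succ
  else c i.succ

/-- The last argument vector in the Hochschild coboundary. -/
def Barg (n : ℕ) (c : Fin (n + 2) → C) : Fin (n + 1) → C := fun i =>
  if (i : ℕ) = 0 then c (Fin.last (n + 1)) * c 0 else c i.castSucc

lemma hochschildB_eq (n : ℕ) (φ : (Fin (n + 1) → C) → ℂ) (c : Fin (n + 2) → C) :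
    hochschildB n φ c =
      (∑ j : Fin (n + 1), (-1 : ℂ) ^ (j : ℕ) * φ (Aarg n j c))
        + (-1 : ℂ) ^ (n + 1) * φ (Barg n c) := rfl

lemma Aarg_shift (n : ℕ) (j : Fin n) (c : Fin (n + 2) → C) :
    Aarg n j.castSucc (fun i => c (i + 1)) = fun i => Aarg n j.succ c (i + 1) := by
  funext i
  induction i using Fin.lastCases with
  | last =>
    have h0 : ((Fin.last n : Fin (n + 1)) + 1) = 0 := Fin.last_add_one n
    have h1 : ((Fin.last n : Fin (n + 1)).succ + 1 : Fin (n + 2)) = 0 := by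
      rw [Fin.succ_last]; exact Fin.last_add_one (n + 1)
    have hlt : (j : ℕ) < n := j.isLt
    simp only [Aarg, h0, h1, Fin.val_last, Fin.coe_castSucc, Fin.val_succ, Fin.val_zero]
    rw [if_neg (by omega), if_neg (by omega), if_pos (by omega), Fin.castSucc_zero]
  | cast k =>
    have e1 : (k.castSucc + 1 : Fin (n + 1)) = k.succ := Fin.coeSucc_eq_succ
    have e2 : ((k.castSucc : Fin (n + 1)).castSucc + 1 : Fin (n + 2)) = k.succ.castSucc := by
      rw [Fin.coeSucc_eq_succ, Fin.succ_castSucc]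
    have e3 : ((k.castSucc : Fin (n + 1)).succ + 1 : Fin (n + 2)) = k.succ.succ := by
      rw [Fin.succ_castSucc, Fin.coeSucc_eq_succ]
    simp only [Aarg, e1, e2, e3, Fin.coe_castSucc, Fin.val_succ]
    rcases lt_trichotomy (k : ℕ) (j : ℕ) with h | h | h
    · rw [if_pos h, if_pos (by omega)]
    · rw [if_neg (by omega), if_pos h, if_neg (by omega), if_pos (by omega)]
    · rw [if_neg (by omega), if_neg (by omega), if_neg (by omega), if_neg (by omega)]

lemma Aarg_last (n : ℕ) (c : Fin (n + 2) → C) :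
    Aarg n (Fin.last n) (fun i => c (i + 1)) = fun i => Barg n c (i + 1) := by
  funext i
  induction i using Fin.lastCases with
  | last =>
    have h0 : ((Fin.last n : Fin (n + 1)) + 1) = 0 := Fin.last_add_one n
    have h1 : ((Fin.last n : Fin (n + 1)).succ + 1 : Fin (n + 2)) = 0 := by
      rw [Fin.succ_last]; exact Fin.last_add_one (n + 1)
    have h2 : ((Fin.last n : Fin (n + 1)).castSucc + 1 : Fin (n + 2)) = Fin.last (n + 1) := by
      rw [Fin.coeSucc_eq_succ, Fin.succ_last]
    simp [Aarg, Barg, h0, h1, h2]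
  | cast k =>
    have e1 : (k.castSucc + 1 : Fin (n + 1)) = k.succ := Fin.coeSucc_eq_succ
    have e2 : ((k.castSucc : Fin (n + 1)).castSucc + 1 : Fin (n + 2)) = k.succ.castSucc := by
      rw [Fin.coeSucc_eq_succ, Fin.succ_castSucc]
    have hk : (k : ℕ) < n := k.isLt
    simp only [Aarg, Barg, e1, e2, Fin.coe_castSucc, Fin.val_succ, Fin.val_last]
    rw [if_pos hk, if_neg (by omega)]

lemma Barg_shift (n : ℕ) (c : Fin (n + 2) → C) :
    Barg n (fun i => c (i + 1)) = Aarg n 0 c := by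
  funext i
  have e1 : (i.castSucc + 1 : Fin (n + 2)) = i.succ := Fin.coeSucc_eq_succ
  have e2 : ((Fin.last (n + 1) : Fin (n + 2)) + 1) = 0 := Fin.last_add_one (n + 1)
  simp only [Barg, Aarg, e1, e2, Fin.val_zero]
  rcases eq_or_ne (i : ℕ) 0 with h | h
  · have hi : i = 0 := Fin.ext h
    subst hi
    simp [Fin.succ_zero_eq_one]
  · rw [if_neg h]; simp [h]

end Aux

/-- The Hochschild coboundary maps cyclic functionals to cyclic functionals. -/
theorem hochschildB_preserves_cyclic {C : Type*} [Ring C] (n : ℕ)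
    (φ : (Fin (n + 1) → C) → ℂ) (hφ : IsCyclic' n φ) :
    IsCyclic' (n + 1) (hochschildB n φ) := by
  intro c
  rw [hochschildB_eq, hochschildB_eq]
  rw [Fin.sum_univ_castSucc
    (f := fun j : Fin (n + 1) => (-1 : ℂ) ^ (j : ℕ) * φ (Aarg n j (fun i => c (i + 1))))]
  rw [Fin.sum_univ_succ (f := fun j : Fin (n + 1) => (-1 : ℂ) ^ (j : ℕ) * φ (Aarg n j c))]
  have hA : ∀ j : Fin n, φ (Aarg n j.castSucc (fun i => c (i + 1)))
      = (-1 : ℂ) ^ n * φ (Aarg n j.succ c) := fun j => by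
    rw [Aarg_shift, hφ]
  have hL : φ (Aarg n (Fin.last n) (fun i => c (i + 1))) = (-1 : ℂ) ^ n * φ (Barg n c) := by
    rw [Aarg_last, hφ]
  rw [Barg_shift, hL]
  simp only [hA, Fin.coe_castSucc, Fin.val_succ, Fin.val_last, Fin.val_zero]
  have key : ∑ j : Fin n, (-1 : ℂ) ^ (j : ℕ) * ((-1 : ℂ) ^ n * φ (Aarg n j.succ c))
      = (-1 : ℂ) ^ (n + 1) * ∑ j : Fin n, (-1 : ℂ) ^ ((j : ℕ) + 1) * φ (Aarg n j.succ c) := by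
    rw [Finset.mul_sum]
    exact Finset.sum_congr rfl fun j _ => by ring
  rw [key]
  ring
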